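/- Let f: ℝ^n → ℝ be L-smooth (not necessarily convex). Suppose sequences (x^k), (v^k), (y^k) in ℝ^n and nonnegative reals (a_k), (A_k) and functions ψ_k satisfy: A_0 = 0, x^0 = v^0, ψ_0(x) = (1/2)‖x − x^0‖₂²; for each k ≥ 0: β_k minimizes β ↦ f(v^k + β(x^k − v^k)) over [0,1] and y^k = v^k + β_k(x^k − v^k); x^{k+1} = y^k − (1/L)∇f(y^k); a_{k+1} > 0 solves a_{k+1}²/(A_k + a_{k+1}) = 1/L; A_{k+1} = A_k + a_{k+1}; ψ_{k+1}(x) = ψ_k(x) + a_{k+1}(f(y^k) + ⟨∇f(y^k), x − y^k⟩); and v^{k+1} is the minimizer of ψ_{k+1} over ℝ^n. Then for every k ≥ 0: A_k · f(x^k) ≤ min_{x ∈ ℝ^n} ψ_k(x) = ψ_k(v^k), and A_k ≥ k²/(4L). -/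

import Mathlib

open scoped RealInnerProductSpace

private lemma line_hasDerivAt {n : ℕ} (f : EuclideanSpace ℝ (Fin n) → ℝ)
    (g : EuclideanSpace ℝ (Fin n) → EuclideanSpace ℝ (Fin n))
    (hdiff : ∀ z, HasGradientAt f (g z) z)
    (p d : EuclideanSpace ℝ (Fin n)) (t : ℝ) :
    HasDerivAt (fun s : ℝ => f (p + s • d)) ⟪g (p + t • d), d⟫ t := by
  have hc : HasDerivAt (fun s : ℝ => p + s • d) d t := by
    simpa using ((hasDerivAt_id t).smul_const d).const_add p
  have h := (hdiff (p + t • d)).hasFDerivAt.comp_hasDerivAt t hc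
  simp at h
  exact h

private lemma quad_min {E : Type*} [NormedAddCommGroup E] [InnerProductSpace ℝ E]
    (ψ : E → ℝ) (c : ℝ) (w m : E)
    (hform : ∀ z, ψ z = c + ⟪w, z⟫ + (1 / 2) * ‖z‖ ^ 2)
    (hmin : ∀ z, ψ m ≤ ψ z) :
    ∀ z, ψ z = ψ m + (1 / 2) * ‖z - m‖ ^ 2 := by
  have hw : w = -m := by
    have h := hmin (-w)
    rw [hform m, hform (-w)] at h
    have h1 : ⟪w, -w⟫ = -‖w‖ ^ 2 := by
      rw [inner_neg_right, real_inner_self_eq_norm_sq]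
    have h2 : ‖w + m‖ ^ 2 = ‖w‖ ^ 2 + 2 * ⟪w, m⟫ + ‖m‖ ^ 2 := norm_add_sq_real w m
    have h3 : ‖w + m‖ ^ 2 ≤ 0 := by rw [norm_neg] at h; nlinarith
    have h4 : w + m = 0 := by
      have h5 : ‖w + m‖ = 0 := by nlinarith [norm_nonneg (w + m)]
      exact norm_eq_zero.mp h5
    exact eq_neg_of_add_eq_zero_left h4
  intro z
  rw [hform z, hform m, hw, inner_neg_left, inner_neg_left, real_inner_self_eq_norm_sq,
    norm_sub_sq_real, real_inner_comm]
  ring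

private lemma descent_ineq {n : ℕ} {L : ℝ} (hL : 0 < L)
    (f : EuclideanSpace ℝ (Fin n) → ℝ)
    (g : EuclideanSpace ℝ (Fin n) → EuclideanSpace ℝ (Fin n))
    (hdiff : ∀ z, HasGradientAt f (g z) z)
    (hlip : ∀ z w, ‖g z - g w‖ ≤ L * ‖z - w‖)
    (z w : EuclideanSpace ℝ (Fin n)) :
    f w ≤ f z + ⟪g z, w - z⟫ + L / 2 * ‖w - z‖ ^ 2 := by
  set d := w - z with hd
  set h : ℝ → ℝ := fun t => f (z + t • d) - t * ⟪g z, d⟫ - L / 2 * ‖d‖ ^ 2 * t ^ 2 with hh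
  have hder : ∀ t : ℝ, HasDerivAt h
      (⟪g (z + t • d), d⟫ - ⟪g z, d⟫ - L * t * ‖d‖ ^ 2) t := by
    intro t
    have h1 := line_hasDerivAt f g hdiff z d t
    have h2 : HasDerivAt (fun s : ℝ => s * ⟪g z, d⟫) ⟪g z, d⟫ t := by
      simpa using (hasDerivAt_id t).mul_const (⟪g z, d⟫ : ℝ)
    have h3 : HasDerivAt (fun s : ℝ => L / 2 * ‖d‖ ^ 2 * s ^ 2)
        (L / 2 * ‖d‖ ^ 2 * (2 * t)) t := by
      have := (hasDerivAt_pow 2 t).const_mul (L / 2 * ‖d‖ ^ 2)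
      simpa using this
    have := (h1.sub h2).sub h3
    refine this.congr_deriv ?_
    ring
  have hanti : AntitoneOn h (Set.Icc 0 1) := by
    apply antitoneOn_of_deriv_nonpos (convex_Icc 0 1)
    · exact fun t _ => (hder t).continuousAt.continuousWithinAt
    · exact fun t _ => (hder t).differentiableAt.differentiableWithinAt
    · intro t ht
      rw [interior_Icc] at ht
      rw [(hder t).deriv]
      have h1 : ⟪g (z + t • d) - g z, d⟫ ≤ ‖g (z + t • d) - g z‖ * ‖d‖ :=
        real_inner_le_norm _ _
      have h2 : ‖g (z + t • d) - g z‖ ≤ L * ‖t • d‖ := by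
        simpa using hlip (z + t • d) z
      have h3 : ‖t • d‖ = t * ‖d‖ := by
        rw [norm_smul, Real.norm_eq_abs, abs_of_pos ht.1]
      have h4 : ⟪g (z + t • d), d⟫ - ⟪g z, d⟫ = ⟪g (z + t • d) - g z, d⟫ :=
        (inner_sub_left _ _ _).symm
      rw [h3] at h2
      nlinarith [norm_nonneg d, norm_nonneg (g (z + t • d) - g z)]
  have key := hanti (Set.left_mem_Icc.mpr zero_le_one) (Set.right_mem_Icc.mpr zero_le_one)
    zero_le_one
  simp only [hh, zero_smul, add_zero, one_smul, zero_mul, zero_pow, mul_zero, sub_zero,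
    one_mul, one_pow, mul_one] at key
  have hzw : z + d = w := by rw [hd]; abel
  rw [hzw] at key
  linarith

set_option maxHeartbeats 1000000 in
theorem stmt_0 (n : ℕ) (L : ℝ) (hL : 0 < L)
    (f : EuclideanSpace ℝ (Fin n) → ℝ)
    (g : EuclideanSpace ℝ (Fin n) → EuclideanSpace ℝ (Fin n))
    (hdiff : ∀ z, HasGradientAt f (g z) z)
    (hlip : ∀ z w, ‖g z - g w‖ ≤ L * ‖z - w‖)
    (x v y : ℕ → EuclideanSpace ℝ (Fin n)) (β a A : ℕ → ℝ)
    (ψ : ℕ → EuclideanSpace ℝ (Fin n) → ℝ)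
    (hA0 : A 0 = 0) (hx0 : x 0 = v 0)
    (hψ0 : ∀ z, ψ 0 z = (1 / 2) * ‖z - x 0‖ ^ 2)
    (hβmem : ∀ k, β k ∈ Set.Icc (0 : ℝ) 1)
    (hβmin : ∀ k, ∀ b ∈ Set.Icc (0 : ℝ) 1,
      f (v k + β k • (x k - v k)) ≤ f (v k + b • (x k - v k)))
    (hy : ∀ k, y k = v k + β k • (x k - v k))
    (hxk : ∀ k, x (k + 1) = y k - (1 / L) • g (y k))
    (hapos : ∀ k, 0 < a (k + 1))
    (ha : ∀ k, (a (k + 1)) ^ 2 / (A k + a (k + 1)) = 1 / L)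
    (hAk : ∀ k, A (k + 1) = A k + a (k + 1))
    (hψk : ∀ k z, ψ (k + 1) z = ψ k z + a (k + 1) * (f (y k) + ⟪g (y k), z - y k⟫))
    (hv : ∀ k z, ψ (k + 1) (v (k + 1)) ≤ ψ (k + 1) z) :
    ∀ k, (A k * f (x k) ≤ ψ k (v k)) ∧ (∀ z, ψ k (v k) ≤ ψ k z) ∧
      (k : ℝ) ^ 2 / (4 * L) ≤ A k := by
  -- A is nonnegative
  have hAnn : ∀ k, 0 ≤ A k := by
    intro k
    induction k with
    | zero => simp [hA0]
    | succ k ih => rw [hAk k]; linarith [hapos k]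
  -- a (k+1)^2 = A (k+1) / L
  have ha2 : ∀ k, a (k + 1) ^ 2 = A (k + 1) / L := by
    intro k
    have hden : 0 < A k + a (k + 1) := by linarith [hAnn k, hapos k]
    have h := ha k
    rw [div_eq_div_iff hden.ne' hL.ne'] at h
    rw [hAk k]
    field_simp
    linarith
  -- growth of A
  have hgrow : ∀ k : ℕ, (k : ℝ) / (2 * Real.sqrt L) ≤ Real.sqrt (A k) := by
    intro k
    induction k with
    | zero => simp [Real.sqrt_nonneg]
    | succ k ih =>
      have hApos : 0 < A (k + 1) := by rw [hAk k]; linarith [hAnn k, hapos k]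
      set s := Real.sqrt (A k) with hs
      set t := Real.sqrt (A (k + 1)) with htd
      set r := Real.sqrt L with hr
      have hrpos : 0 < r := Real.sqrt_pos.2 hL
      have hr2 : r ^ 2 = L := Real.sq_sqrt hL.le
      have ht : 0 < t := Real.sqrt_pos.2 hApos
      have hs0 : 0 ≤ s := Real.sqrt_nonneg _
      have hts : s ≤ t := Real.sqrt_le_sqrt (by rw [hAk k]; linarith [hapos k])
      have ht2 : t ^ 2 = A (k + 1) := Real.sq_sqrt hApos.le
      have hs2 : s ^ 2 = A k := Real.sq_sqrt (hAnn k)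
      have haval : a (k + 1) = t ^ 2 - s ^ 2 := by rw [ht2, hs2, hAk k]; ring
      have hkey : (t ^ 2 - s ^ 2) ^ 2 * L = t ^ 2 := by
        have h0 := ha2 k
        rw [haval] at h0
        field_simp at h0
        linarith
      have hX2 : ((t ^ 2 - s ^ 2) * r) ^ 2 = t ^ 2 := by
        rw [mul_pow, hr2]; exact hkey
      have hX0 : 0 ≤ (t ^ 2 - s ^ 2) * r := by
        have : s ^ 2 ≤ t ^ 2 := by nlinarith
        nlinarith
      have hXt : ((t ^ 2 - s ^ 2) * r - t) * ((t ^ 2 - s ^ 2) * r + t) = 0 := by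
        linear_combination hX2
      have hXeq : (t ^ 2 - s ^ 2) * r = t := by
        rcases mul_eq_zero.1 hXt with h' | h'
        · linarith
        · linarith
      have hfac : 0 ≤ (t - s) * r := mul_nonneg (by linarith) hrpos.le
      have h5 : (t - s) * r * (t + s) ≤ (t - s) * r * (2 * t) :=
        mul_le_mul_of_nonneg_left (by linarith) hfac
      have h7 : (t - s) * r * (t + s) = t := by linear_combination hXeq
      have h8 : t * 1 ≤ t * (2 * r * (t - s)) := by nlinarith [h5, h7]
      have hone : 1 ≤ 2 * r * (t - s) := le_of_mul_le_mul_left h8 ht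
      rw [div_le_iff₀ (by positivity)] at ih ⊢
      push_cast
      have hiden : t * (2 * r) = s * (2 * r) + 2 * r * (t - s) := by ring
      linarith
  -- β-optimality : ⟪g (y k), v k - y k⟫ ≥ 0
  have hgy : ∀ k, 0 ≤ ⟪g (y k), v k - y k⟫ := by
    intro k
    set d := x k - v k with hdk
    have hD := line_hasDerivAt f g hdiff (v k) d (β k)
    rw [← hy k] at hD
    have hmin : IsLocalMinOn (fun t : ℝ => f (v k + t • d)) (Set.Icc 0 1) (β k) :=
      IsMinOn.localize (isMinOn_iff.mpr (fun b hb => hβmin k b hb))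
    have hseg : (0 : ℝ) - β k ∈ posTangentConeAt (Set.Icc 0 1) (β k) :=
      sub_mem_posTangentConeAt_of_segment_subset
        ((convex_Icc 0 1).segment_subset (hβmem k) ⟨le_refl 0, zero_le_one⟩)
    have hnn := hmin.hasFDerivWithinAt_nonneg hD.hasFDerivAt.hasFDerivWithinAt hseg
    simp only [ContinuousLinearMap.smulRight_apply, ContinuousLinearMap.one_apply,
      smul_eq_mul, ContinuousLinearMap.toSpanSingleton_apply] at hnn
    have hvy : v k - y k = -(β k • d) := by rw [hy k]; abel
    rw [hvy, inner_neg_right, real_inner_smul_right]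
    nlinarith
  -- f (y k) ≤ f (x k)
  have hfy : ∀ k, f (y k) ≤ f (x k) := by
    intro k
    have h := hβmin k 1 ⟨zero_le_one, le_refl 1⟩
    rw [← hy k] at h
    simpa using h
  -- descent step
  have hdesc : ∀ k, f (x (k + 1)) ≤ f (y k) - 1 / (2 * L) * ‖g (y k)‖ ^ 2 := by
    intro k
    have h := descent_ineq hL f g hdiff hlip (y k) (x (k + 1))
    rw [hxk k] at h ⊢
    have e1 : y k - (1 / L) • g (y k) - y k = -((1 / L) • g (y k)) := by abel
    rw [e1, inner_neg_right, real_inner_smul_right, real_inner_self_eq_norm_sq,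
      norm_neg, norm_smul, Real.norm_eq_abs] at h
    have : |1 / L| = 1 / L := abs_of_pos (by positivity)
    rw [this, mul_pow] at h
    have hG : 0 ≤ ‖g (y k)‖ ^ 2 := by positivity
    have : L / 2 * ((1 / L) ^ 2 * ‖g (y k)‖ ^ 2) - 1 / L * ‖g (y k)‖ ^ 2
        = -(1 / (2 * L)) * ‖g (y k)‖ ^ 2 := by field_simp; ring
    linarith
  -- main induction
  have main : ∀ k, (A k * f (x k) ≤ ψ k (v k)) ∧ (∀ z, ψ k (v k) ≤ ψ k z) ∧
      (∃ c w, ∀ z, ψ k z = c + ⟪w, z⟫ + (1 / 2) * ‖z‖ ^ 2) := by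
    intro k
    induction k with
    | zero =>
      have hform : ∀ z, ψ 0 z = (1 / 2) * ‖x 0‖ ^ 2 + ⟪-x 0, z⟫ + (1 / 2) * ‖z‖ ^ 2 := by
        intro z
        rw [hψ0 z, norm_sub_sq_real, inner_neg_left, real_inner_comm]
        ring
      have hmin0 : ∀ z, ψ 0 (v 0) ≤ ψ 0 z := by
        intro z
        rw [hψ0 z, hψ0 (v 0), ← hx0]
        simp
        try positivity
      refine ⟨?_, hmin0, ⟨(1 / 2) * ‖x 0‖ ^ 2, -x 0, hform⟩⟩
      rw [hA0, hψ0 (v 0), ← hx0]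
      simp
    | succ k ih =>
      obtain ⟨ih1, ih2, c, wv, ihform⟩ := ih
      have hquad := quad_min (ψ k) c wv (v k) ihform ih2
      set ak := a (k + 1) with hak
      have hakpos : 0 < ak := hapos k
      -- lower bound on ψ (k+1)
      have hlb : ∀ z, ψ k (v k) + ak * f (y k) + ak * ⟪g (y k), v k - y k⟫
          - ak ^ 2 / 2 * ‖g (y k)‖ ^ 2 ≤ ψ (k + 1) z := by
        intro z
        rw [hψk k z, hquad z]
        have hsq : 0 ≤ ‖(z - v k) + ak • g (y k)‖ ^ 2 := by positivity
        rw [norm_add_sq_real] at hsq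
        have e1 : ⟪z - v k, ak • g (y k)⟫ = ak * ⟪z - v k, g (y k)⟫ :=
          real_inner_smul_right _ _ _
        have e2 : ‖ak • g (y k)‖ ^ 2 = ak ^ 2 * ‖g (y k)‖ ^ 2 := by
          rw [norm_smul, mul_pow, Real.norm_eq_abs, sq_abs]
        have e3 : ⟪g (y k), z - y k⟫ = ⟪g (y k), z - v k⟫ + ⟪g (y k), v k - y k⟫ := by
          rw [← inner_add_right]
          congr 1
          abel
        have e4 : ⟪g (y k), z - v k⟫ = ⟪z - v k, g (y k)⟫ := real_inner_comm _ _
        rw [e1, e2] at hsq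
        rw [e3, e4]
        linarith
      refine ⟨?_, hv k, ⟨c + ak * f (y k) - ak * ⟪g (y k), y k⟫, wv + ak • g (y k), ?_⟩⟩
      · have h1 := hlb (v (k + 1))
        have hAk1 : A (k + 1) = A k + ak := hAk k
        have hAk1nn : 0 ≤ A (k + 1) := hAnn (k + 1)
        have hfd := hdesc k
        have hmul : A (k + 1) * f (x (k + 1)) ≤
            A (k + 1) * (f (y k) - 1 / (2 * L) * ‖g (y k)‖ ^ 2) :=
          mul_le_mul_of_nonneg_left hfd hAk1nn
        have he : A (k + 1) * (1 / (2 * L)) = ak ^ 2 / 2 := by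
          rw [ha2 k]
          ring
        have hfmul : A k * f (y k) ≤ A k * f (x k) :=
          mul_le_mul_of_nonneg_left (hfy k) (hAnn k)
        have hinn : 0 ≤ ak * ⟪g (y k), v k - y k⟫ :=
          mul_nonneg hakpos.le (hgy k)
        set G := ‖g (y k)‖ ^ 2 with hG
        have hdist : A (k + 1) * (f (y k) - 1 / (2 * L) * G)
            = A k * f (y k) + ak * f (y k) - ak ^ 2 / 2 * G := by
          rw [hAk1] at he ⊢
          linear_combination (-G) * he
        linarith [hmul, hdist, h1, ih1, hfmul, hinn]
      · intro z
        rw [hψk k z, ihform z, inner_add_left, real_inner_smul_left, inner_sub_right]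
        ring
  intro k
  obtain ⟨h1, h2, _⟩ := main k
  refine ⟨h1, h2, ?_⟩
  have hg := hgrow k
  have hnn : 0 ≤ (k : ℝ) / (2 * Real.sqrt L) := by positivity
  have hsq : ((k : ℝ) / (2 * Real.sqrt L)) ^ 2 ≤ Real.sqrt (A k) ^ 2 :=
    pow_le_pow_left₀ hnn hg 2
  rw [Real.sq_sqrt (hAnn k)] at hsq
  have he : ((k : ℝ) / (2 * Real.sqrt L)) ^ 2 = (k : ℝ) ^ 2 / (4 * L) := by
    rw [div_pow, mul_pow, Real.sq_sqrt hL.le]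
    norm_num
  linarith [he ▸ hsq]
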